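/- Suppose u : ℂ → ℂ is a non-vanishing entire function of the form u(z) = u(0) e^{a₁ z + a₂ z²} with a₁, a₂ ∈ ℂ. If u belongs to the Fock space F_p for some 0 < p < ∞, then |a₂| < 1/2. -/

import Mathlib

open MeasureTheory Real Complex

theorem nonvanishing_type (u : ℂ → ℂ) (a₁ a₂ : ℂ)
    (hform : ∀ z : ℂ, u z = u 0 * Complex.exp (a₁ * z + a₂ * z ^ 2))
    (hnv : ∀ z : ℂ, u z ≠ 0) (p : ℝ) (hp : 0 < p)
    (hu : (∫⁻ z : ℂ, ENNReal.ofReal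
        (‖u z‖ ^ p * Real.exp (-p * ‖z‖ ^ 2 / 2))) < ⊤) :
    ‖a₂‖ < 1 / 2 := by
  by_contra hlt
  push_neg at hlt
  have ha₂ : a₂ ≠ 0 := by
    intro h
    rw [h, norm_zero] at hlt
    norm_num at hlt
  -- construct a unit vector w₀ with a₂ * w₀ ^ 2 = |a₂|
  set c : ℂ := (‖a₂‖ : ℂ) / a₂ with hc
  have hcne : (‖a₂‖ : ℂ) ≠ 0 := by
    simpa using norm_ne_zero_iff.mpr ha₂
  have habsc : ‖c‖ = 1 := by
    rw [hc, norm_div, Complex.norm_real, norm_norm, div_self (norm_ne_zero_iff.mpr ha₂)]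
  set w₀ : ℂ := Complex.exp (c.arg * Complex.I / 2) with hw₀
  have hw₀sq : w₀ ^ 2 = c := by
    have h1 : ((‖c‖ : ℂ)) * Complex.exp (c.arg * Complex.I) = c :=
      Complex.norm_mul_exp_arg_mul_I c
    rw [habsc, Complex.ofReal_one, one_mul] at h1
    rw [hw₀, sq, ← Complex.exp_add,
      show (c.arg : ℂ) * Complex.I / 2 + (c.arg : ℂ) * Complex.I / 2 = (c.arg : ℂ) * Complex.I
        by ring, h1]
  have habsw₀ : ‖w₀‖ = 1 := by
    rw [hw₀, Complex.norm_exp]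
    have : ((c.arg : ℂ) * Complex.I / 2).re = 0 := by simp
    rw [this, Real.exp_zero]
  -- adjust the sign
  set w : ℂ := if 0 ≤ (a₁ * w₀).re then w₀ else -w₀ with hw
  have habsw : ‖w‖ = 1 := by
    rw [hw]; split_ifs <;> simp [habsw₀]
  have hwsq : a₂ * w ^ 2 = (‖a₂‖ : ℂ) := by
    have : w ^ 2 = c := by rw [hw]; split_ifs <;> simp [hw₀sq]
    rw [this, hc]
    field_simp
  have hw1 : 0 ≤ (a₁ * w).re := by
    rw [hw]; split_ifs with h
    · exact h
    · push_neg at h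
      have : (a₁ * -w₀).re = -(a₁ * w₀).re := by simp
      rw [this]
      linarith
  -- the strip
  set cw : Circle := ⟨(starRingEnd ℂ) w, mem_sphere_zero_iff_norm.mpr (by
    rw [Complex.norm_conj]; exact habsw)⟩ with hcw
  set T : Set ℂ := Complex.measurableEquivRealProd ⁻¹' (Set.Ici (0:ℝ) ×ˢ Set.Icc (-1:ℝ) 1)
    with hT
  set S : Set ℂ := (fun z => ((starRingEnd ℂ) w) * z) ⁻¹' T with hSdef
  have hTmeas : MeasurableSet T :=
    Complex.measurableEquivRealProd.measurable (measurableSet_Ici.prod measurableSet_Icc)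
  have hSmeas : MeasurableSet S := (measurable_const_mul _) hTmeas
  have volT : volume T = ⊤ := by
    rw [hT, Complex.volume_preserving_equiv_real_prod.measure_preimage
      (measurableSet_Ici.prod measurableSet_Icc).nullMeasurableSet,
      Measure.volume_eq_prod, Measure.prod_prod, Real.volume_Ici,
      ENNReal.top_mul (by simp [Real.volume_Icc])]
  have volS : volume S = ⊤ := by
    have h := ((rotation cw).measurePreserving).measure_preimage hTmeas.nullMeasurableSet
    have he : ⇑(rotation cw) ⁻¹' T = S := by
      ext z
      simp [hSdef, Set.mem_preimage, rotation_apply, hcw]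
      exact Iff.rfl
    rw [he] at h
    rw [h, volT]
  -- positivity of the lower bound
  have hu0 : 0 < ‖u 0‖ := norm_pos_iff.mpr (hnv 0)
  set C : ℝ := ‖a₁‖ + ‖a₂‖ + 1/2 with hC
  set ε : ℝ := ‖u 0‖ ^ p * Real.exp (-(p * C)) with hε
  have hεpos : 0 < ε := by
    rw [hε]
    positivity
  -- pointwise lower bound on S
  have key : ∀ z ∈ S, ε ≤ ‖u z‖ ^ p * Real.exp (-p * ‖z‖ ^ 2 / 2) := by
    intro z hz
    rw [hSdef, Set.mem_preimage, hT, Set.mem_preimage,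
      Complex.measurableEquivRealProd_apply, Set.mem_prod] at hz
    obtain ⟨ht0, hs1, hs2⟩ : 0 ≤ ((starRingEnd ℂ) w * z).re ∧
        -1 ≤ ((starRingEnd ℂ) w * z).im ∧ ((starRingEnd ℂ) w * z).im ≤ 1 := by
      simpa [Set.mem_Ici, Set.mem_Icc, and_assoc] using hz
    set ζ : ℂ := (starRingEnd ℂ) w * z with hζ
    set t : ℝ := ζ.re
    set s : ℝ := ζ.im
    have hzζ : z = w * ζ := by
      have hn : ((Complex.normSq w : ℂ)) = 1 := by
        rw [Complex.normSq_eq_norm_sq, habsw]; norm_num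
      calc z = (w * (starRingEnd ℂ) w) * z := by rw [Complex.mul_conj, hn, one_mul]
        _ = w * ζ := by rw [hζ]; ring
    have hexpand : a₁ * z + a₂ * z ^ 2 = (a₁ * w) * ζ + (‖a₂‖ : ℂ) * ζ ^ 2 := by
      rw [hzζ, ← hwsq]; ring
    have hre : (a₁ * z + a₂ * z ^ 2).re
        = (a₁ * w).re * t - (a₁ * w).im * s + ‖a₂‖ * (t * t - s * s) := by
      rw [hexpand]
      simp only [Complex.add_re, Complex.mul_re, Complex.mul_im, sq, Complex.ofReal_re,
        Complex.ofReal_im]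
      ring
    have habsz : ‖z‖ ^ 2 = t * t + s * s := by
      rw [hzζ, norm_mul, habsw, one_mul, Complex.sq_norm, Complex.normSq_apply]
    have him : |(a₁ * w).im| ≤ ‖a₁‖ := by
      refine le_trans (Complex.abs_im_le_norm _) ?_
      rw [norm_mul, habsw, mul_one]
    have hre1 : 0 ≤ (a₁ * w).re * t := mul_nonneg hw1 ht0
    have hre2 : -(‖a₁‖) ≤ -((a₁ * w).im * s) := by
      have h1 : |(a₁ * w).im * s| ≤ ‖a₁‖ * 1 := by
        rw [abs_mul]
        exact mul_le_mul him (abs_le.mpr ⟨hs1, hs2⟩) (abs_nonneg _)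
          (norm_nonneg _)
      rw [mul_one] at h1
      have := neg_abs_le ((a₁ * w).im * s)
      linarith [abs_le.mp h1]
    have hX : -C ≤ (a₁ * z + a₂ * z ^ 2).re - ‖z‖ ^ 2 / 2 := by
      rw [hre, habsz, hC]
      have hss : s * s ≤ 1 := by nlinarith
      have htt : 0 ≤ (‖a₂‖ - 1/2) * (t * t) := by
        apply mul_nonneg (by linarith) (mul_self_nonneg t)
      nlinarith [norm_nonneg a₂]
    have hval : ‖u z‖ ^ p * Real.exp (-p * ‖z‖ ^ 2 / 2)
        = ‖u 0‖ ^ p *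
          Real.exp (p * ((a₁ * z + a₂ * z ^ 2).re - ‖z‖ ^ 2 / 2)) := by
      rw [hform z, norm_mul, Complex.norm_exp,
        Real.mul_rpow (norm_nonneg _) (le_of_lt (Real.exp_pos _)),
        ← Real.exp_mul, mul_assoc, ← Real.exp_add]
      congr 1
      ring
    rw [hval, hε]
    apply mul_le_mul_of_nonneg_left _ (Real.rpow_nonneg (norm_nonneg _) p)
    apply Real.exp_le_exp.mpr
    have := mul_le_mul_of_nonneg_left hX (le_of_lt hp)
    linarith
  -- conclude
  have htop : (∫⁻ z : ℂ, ENNReal.ofReal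
      (‖u z‖ ^ p * Real.exp (-p * ‖z‖ ^ 2 / 2))) = ⊤ := by
    rw [eq_top_iff]
    calc (⊤ : ENNReal) = ENNReal.ofReal ε * volume S := by
          rw [volS, ENNReal.mul_top (by simpa [ENNReal.ofReal_eq_zero] using hεpos.not_ge)]
      _ = ∫⁻ x in S, ENNReal.ofReal ε := (setLIntegral_const S _).symm
      _ = ∫⁻ z, S.indicator (fun _ => ENNReal.ofReal ε) z := (lintegral_indicator hSmeas _).symm
      _ ≤ _ := by
          apply lintegral_mono
          intro z
          by_cases hzS : z ∈ S
          · rw [Set.indicator_of_mem hzS]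
            exact ENNReal.ofReal_le_ofReal (key z hzS)
          · rw [Set.indicator_of_notMem hzS]
            exact zero_le
  exact hu.ne htop
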